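/- For a finite maximum-entropy MDP with a continuously differentiable parametrized policy, the per-start-state objective J(θ|s₀) = Σ_a π_θ(a|s₀) Q^{π_θ}(s₀,a) + H^{π_θ}(s₀) satisfies dJ(θ|s₀)/dθ = Σ_{k=0}^∞ Σ_s γ^k p_k^{π_θ}(s₀→s) 𝒢_θ(s), where 𝒢_θ(s) = Σ_a (dπ_θ(a|s)/dθ) Q^{π_θ}(s,a) + dH^{π_θ}(s)/dθ, and the double series converges absolutely. -/

import Mathlib

open Finset

/-- Uniform bound for a finite family of continuous functions on a compact set. -/
lemma exists_bound_family_aux {ι : Type*} [Fintype ι] (f : ι → ℝ → ℝ)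
    (hf : ∀ i, Continuous (f i)) (K : Set ℝ) (hK : IsCompact K) :
    ∃ C : ℝ, 0 ≤ C ∧ ∀ θ ∈ K, ∀ i, |f i θ| ≤ C := by
  obtain ⟨C, hC⟩ := hK.exists_bound_of_continuousOn
    (f := fun θ => ∑ i, |f i θ|)
    ((continuous_finset_sum _ fun i _ => (hf i).abs).continuousOn)
  refine ⟨max C 0, le_max_right _ _, fun θ hθ i => ?_⟩
  have h1 : |f i θ| ≤ ∑ j, |f j θ| :=
    Finset.single_le_sum (f := fun j => |f j θ|) (fun j _ => abs_nonneg _) (Finset.mem_univ i)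
  have h2 : ∑ j, |f j θ| ≤ C := le_trans (le_abs_self _) (by simpa using hC θ hθ)
  exact h1.trans (h2.trans (le_max_left _ _))

set_option maxHeartbeats 1000000 in
/-- For a finite maximum-entropy MDP with a continuously differentiable parametrized policy,
the per-start-state objective `J(θ|s₀) = Σ_a π_θ(a|s₀) Q^{π_θ}(s₀,a) + H^{π_θ}(s₀)` satisfies
`dJ(θ|s₀)/dθ = Σ_{k=0}^∞ Σ_s γ^k p_k^{π_θ}(s₀→s) 𝒢_θ(s)`, where
`𝒢_θ(s) = Σ_a (dπ_θ(a|s)/dθ) Q^{π_θ}(s,a) + dH^{π_θ}(s)/dθ`, and the double series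
converges absolutely. -/
theorem per_start_state_objective_deriv_series
    {S A : Type*} [Fintype S] [Fintype A] [DecidableEq S]
    (p : S → A → S → ℝ) (hp_nonneg : ∀ s a s', 0 ≤ p s a s')
    (hp_sum : ∀ s a, ∑ s', p s a s' = 1)
    (r : S → A → ℝ)
    (γ : ℝ) (hγ0 : 0 ≤ γ) (hγ1 : γ < 1)
    (π : ℝ → S → A → ℝ)
    (hπ_smooth : ∀ s a, ContDiff ℝ 1 (fun θ => π θ s a))
    (hπ_pos : ∀ θ s a, 0 < π θ s a)
    (hπ_sum : ∀ θ s, ∑ a, π θ s a = 1)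
    (pk : ℝ → ℕ → S → S → ℝ)
    (hpk0 : ∀ θ s s', pk θ 0 s s' = if s' = s then 1 else 0)
    (hpkS : ∀ θ k s s',
      pk θ (k + 1) s s' = ∑ a, π θ s a * ∑ s'', p s a s'' * pk θ k s'' s')
    (H : ℝ → S → ℝ) (hH : ∀ θ s, H θ s = -∑ a, π θ s a * Real.log (π θ s a))
    (Q : ℝ → S → A → ℝ)
    (hQ : ∀ θ s a, Q θ s a = r s a +
      ∑' k : ℕ, γ ^ (k + 1) *
        ∑ s', (∑ s₁, p s a s₁ * pk θ k s₁ s') * ((∑ a', π θ s' a' * r s' a') + H θ s'))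
    -- the quantity 𝒢_θ(s)
    (G : ℝ → S → ℝ)
    (hG : ∀ θ₀ s, G θ₀ s = (∑ a, deriv (fun θ => π θ s a) θ₀ * Q θ₀ s a) +
      deriv (fun θ => H θ s) θ₀) :
    ∀ (θ₀ : ℝ) (s₀ : S),
      Summable (fun ks : ℕ × S => |γ ^ ks.1 * pk θ₀ ks.1 s₀ ks.2 * G θ₀ ks.2|) ∧
      HasDerivAt
        (fun θ => (∑ a, π θ s₀ a * Q θ s₀ a) + H θ s₀)
        (∑' k : ℕ, ∑ s, γ ^ k * pk θ₀ k s₀ s * G θ₀ s)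
        θ₀ := by
  intro θ₀ s₀
  -- abbreviations
  obtain ⟨P, hPdef⟩ : ∃ P : ℝ → S → S → ℝ,
      P = fun θ s s' => ∑ a, π θ s a * p s a s' := ⟨_, rfl⟩
  obtain ⟨ρ, hρdef⟩ : ∃ ρ : ℝ → S → ℝ,
      ρ = fun θ s => (∑ a, π θ s a * r s a) + H θ s := ⟨_, rfl⟩
  obtain ⟨V, hVdef⟩ : ∃ V : ℝ → S → ℝ,
      V = fun θ s => (∑ a, π θ s a * Q θ s a) + H θ s := ⟨_, rfl⟩
  obtain ⟨dπ, hdπ⟩ : ∃ d : S → A → ℝ → ℝ,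
      d = fun s a θ => deriv (fun t => π t s a) θ := ⟨_, rfl⟩
  -- basic facts about π
  have hπ_cont : ∀ s a, Continuous (fun θ => π θ s a) := fun s a => (hπ_smooth s a).continuous
  have hπ_deriv : ∀ s a θ, HasDerivAt (fun t => π t s a) (dπ s a θ) θ := by
    intro s a θ
    rw [hdπ]
    exact (((hπ_smooth s a).differentiable one_ne_zero) θ).hasDerivAt
  have hdπ_cont : ∀ s a, Continuous (dπ s a) := by
    intro s a; rw [hdπ]; exact (hπ_smooth s a).continuous_deriv le_rfl
  have hπ_le1 : ∀ θ s a, π θ s a ≤ 1 := by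
    intro θ s a
    calc π θ s a ≤ ∑ a', π θ s a' :=
          Finset.single_le_sum (fun a' _ => (hπ_pos θ s a').le) (Finset.mem_univ a)
    _ = 1 := hπ_sum θ s
  -- basic facts about P
  have hP_nonneg : ∀ θ s s', 0 ≤ P θ s s' := by
    intro θ s s'; rw [hPdef]
    exact Finset.sum_nonneg fun a _ => mul_nonneg (hπ_pos θ s a).le (hp_nonneg s a s')
  have hP_row : ∀ θ s, ∑ s', P θ s s' = 1 := by
    intro θ s; rw [hPdef]
    rw [Finset.sum_comm]
    simp only [← Finset.mul_sum, hp_sum, mul_one, hπ_sum]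
  have hP_cont : ∀ s s', Continuous (fun θ => P θ s s') := by
    intro s s'; rw [hPdef]
    exact continuous_finset_sum _ fun a _ => (hπ_cont s a).mul continuous_const
  obtain ⟨dP, hdP⟩ : ∃ d : S → S → ℝ → ℝ,
      d = fun s s' θ => ∑ a, dπ s a θ * p s a s' := ⟨_, rfl⟩
  have hP_deriv : ∀ s s' θ, HasDerivAt (fun t => P t s s') (dP s s' θ) θ := by
    intro s s' θ
    rw [hPdef, hdP]
    exact HasDerivAt.fun_sum fun a _ => (hπ_deriv s a θ).mul_const (p s a s')
  have hdP_cont : ∀ s s', Continuous (dP s s') := by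
    intro s s'; rw [hdP]
    exact continuous_finset_sum _ fun a _ => (hdπ_cont s a).mul continuous_const
  -- basic facts about pk
  have pk_basic : ∀ k θ s, (∀ s', 0 ≤ pk θ k s s') ∧ (∑ s', pk θ k s s' = 1) := by
    intro k
    induction k with
    | zero =>
      intro θ s
      constructor
      · intro s'; rw [hpk0]; positivity
      · simp only [hpk0]
        simp
    | succ k ih =>
      intro θ s
      constructor
      · intro s'
        rw [hpkS]
        refine Finset.sum_nonneg fun a _ => mul_nonneg (hπ_pos θ s a).le ?_
        exact Finset.sum_nonneg fun s'' _ =>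
          mul_nonneg (hp_nonneg s a s'') ((ih θ s'').1 s')
      · simp only [hpkS]
        have h1 : ∀ s'' : S, ∑ s', pk θ k s'' s' = 1 := fun s'' => (ih θ s'').2
        calc ∑ s', ∑ a, π θ s a * ∑ s'', p s a s'' * pk θ k s'' s'
            = ∑ a, π θ s a * ∑ s'', p s a s'' * ∑ s', pk θ k s'' s' := by
              rw [Finset.sum_comm]
              refine Finset.sum_congr rfl fun a _ => ?_
              rw [← Finset.mul_sum]
              congr 1
              rw [Finset.sum_comm]
              exact Finset.sum_congr rfl fun s'' _ => (Finset.mul_sum _ _ _).symm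
          _ = 1 := by simp [h1, hp_sum, hπ_sum]
  have pk_nonneg : ∀ θ k s s', 0 ≤ pk θ k s s' := fun θ k s s' => (pk_basic k θ s).1 s'
  have pk_row : ∀ θ k s, ∑ s', pk θ k s s' = 1 := fun θ k s => (pk_basic k θ s).2
  have pk_le1 : ∀ θ k s s', pk θ k s s' ≤ 1 := by
    intro θ k s s'
    calc pk θ k s s' ≤ ∑ s'', pk θ k s s'' :=
          Finset.single_le_sum (f := fun s'' => pk θ k s s'')
            (fun s'' _ => pk_nonneg θ k s s'') (Finset.mem_univ s')
      _ = 1 := pk_row θ k s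
  -- left and right recurrences in terms of P
  have hpkS' : ∀ θ k s s', pk θ (k + 1) s s' = ∑ s'', P θ s s'' * pk θ k s'' s' := by
    intro θ k s s'
    rw [hpkS, hPdef]
    simp only [Finset.mul_sum, Finset.sum_mul]
    rw [Finset.sum_comm]
    exact Finset.sum_congr rfl fun s'' _ => Finset.sum_congr rfl fun a _ => by ring
  have hpkR : ∀ θ k s s', pk θ (k + 1) s s' = ∑ s'', pk θ k s s'' * P θ s'' s' := by
    intro θ k
    induction k with
    | zero =>
      intro s s'
      rw [hpkS']
      simp [hpk0]
    | succ k ih =>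
      intro s s'
      rw [hpkS' θ (k+1) s s']
      calc ∑ s'', P θ s s'' * pk θ (k + 1) s'' s'
          = ∑ s'', P θ s s'' * ∑ v, pk θ k s'' v * P θ v s' := by
            exact Finset.sum_congr rfl fun s'' _ => by rw [ih]
        _ = ∑ v, (∑ s'', P θ s s'' * pk θ k s'' v) * P θ v s' := by
            simp only [Finset.mul_sum, Finset.sum_mul]
            rw [Finset.sum_comm]
            exact Finset.sum_congr rfl fun v _ => Finset.sum_congr rfl fun s'' _ => by ring
        _ = ∑ v, pk θ (k + 1) s v * P θ v s' := by
            exact Finset.sum_congr rfl fun v _ => by rw [← hpkS']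
  -- derivative of the entropy term
  obtain ⟨dH, hdHdef⟩ : ∃ d : S → ℝ → ℝ,
      d = fun s θ => -∑ a, (dπ s a θ * Real.log (π θ s a) + dπ s a θ) := ⟨_, rfl⟩
  have hH_deriv : ∀ s θ, HasDerivAt (fun t => H t s) (dH s θ) θ := by
    intro s θ
    have hfun : (fun t => H t s) = fun t => -∑ a, π t s a * Real.log (π t s a) :=
      funext fun t => hH t s
    rw [hfun, hdHdef]
    refine HasDerivAt.neg (HasDerivAt.fun_sum fun a _ => ?_)
    have hlog : HasDerivAt (fun t => Real.log (π t s a)) ((π θ s a)⁻¹ * dπ s a θ) θ :=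
      HasDerivAt.comp θ (Real.hasDerivAt_log (hπ_pos θ s a).ne') (hπ_deriv s a θ)
    have h := (hπ_deriv s a θ).mul hlog
    rwa [mul_inv_cancel_left₀ (hπ_pos θ s a).ne'] at h
  have hdH_cont : ∀ s, Continuous (dH s) := by
    intro s; rw [hdHdef]
    refine (continuous_finset_sum _ fun a _ => ?_).neg
    exact ((hdπ_cont s a).mul ((hπ_cont s a).log fun θ => (hπ_pos θ s a).ne')).add (hdπ_cont s a)
  -- derivative of ρ
  obtain ⟨dρ, hdρdef⟩ : ∃ d : S → ℝ → ℝ,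
      d = fun s θ => (∑ a, dπ s a θ * r s a) + dH s θ := ⟨_, rfl⟩
  have hρ_deriv : ∀ s θ, HasDerivAt (fun t => ρ t s) (dρ s θ) θ := by
    intro s θ
    rw [hρdef, hdρdef]
    exact (HasDerivAt.fun_sum fun a _ => (hπ_deriv s a θ).mul_const (r s a)).add (hH_deriv s θ)
  have hρ_cont : ∀ s, Continuous (fun θ => ρ θ s) :=
    fun s => continuous_iff_continuousAt.2 fun θ => (hρ_deriv s θ).differentiableAt.continuousAt
  have hdρ_cont : ∀ s, Continuous (dρ s) := by
    intro s; rw [hdρdef]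
    exact (continuous_finset_sum _ fun a _ => (hdπ_cont s a).mul continuous_const).add
      (hdH_cont s)
  -- compact bounds on a neighborhood of θ₀
  obtain ⟨K, hKdef⟩ : ∃ K : Set ℝ, K = Metric.closedBall θ₀ 1 := ⟨_, rfl⟩
  have hKcpt : IsCompact K := by rw [hKdef]; exact isCompact_closedBall θ₀ 1
  obtain ⟨Cd, hCd0, hCd⟩ := exists_bound_family_aux (fun s θ => ∑ s'', |dP s s'' θ|)
    (fun s => continuous_finset_sum _ fun s'' _ => (hdP_cont s s'').abs) K hKcpt
  have hCd' : ∀ θ ∈ K, ∀ s, ∑ s'', |dP s s'' θ| ≤ Cd := by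
    intro θ hθ s
    have := hCd θ hθ s
    rwa [abs_of_nonneg (Finset.sum_nonneg fun s'' _ => abs_nonneg _)] at this
  obtain ⟨Cρ, hCρ0, hCρ⟩ := exists_bound_family_aux (fun s θ => ρ θ s) hρ_cont K hKcpt
  obtain ⟨Cρ', hCρ'0, hCρ'⟩ := exists_bound_family_aux (fun s θ => dρ s θ) hdρ_cont K hKcpt
  -- differentiability of pk with bounds
  have pkD : ∀ k : ℕ, ∃ D : S → S → ℝ → ℝ,
      (∀ s s', Continuous (fun θ => pk θ k s s')) ∧
      (∀ s s' θ, HasDerivAt (fun t => pk t k s s') (D s s' θ) θ) ∧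
      (∀ s s', Continuous (D s s')) ∧
      (∀ θ ∈ K, ∀ s s', |D s s' θ| ≤ k * Cd) := by
    intro k
    induction k with
    | zero =>
      refine ⟨fun _ _ _ => 0, fun s s' => ?_, fun s s' θ => ?_, fun s s' => continuous_const,
        fun θ _ s s' => by simp⟩
      · have : (fun θ => pk θ 0 s s') = fun _ => if s' = s then (1:ℝ) else 0 :=
          funext fun θ => hpk0 θ s s'
        rw [this]; exact continuous_const
      · have : (fun t => pk t 0 s s') = fun _ => if s' = s then (1:ℝ) else 0 :=
          funext fun t => hpk0 t s s'
        rw [this]; exact hasDerivAt_const θ _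
    | succ k ih =>
      obtain ⟨D, hDc, hD, hDcont, hDb⟩ := ih
      refine ⟨fun s s' θ => ∑ s'', (dP s s'' θ * pk θ k s'' s' + P θ s s'' * D s'' s' θ),
        fun s s' => ?_, fun s s' θ => ?_, fun s s' => ?_, fun θ hθ s s' => ?_⟩
      · have : (fun θ => pk θ (k+1) s s') = fun θ => ∑ s'', P θ s s'' * pk θ k s'' s' :=
          funext fun θ => hpkS' θ k s s'
        rw [this]
        exact continuous_finset_sum _ fun s'' _ => (hP_cont s s'').mul (hDc s'' s')
      · have : (fun t => pk t (k+1) s s') = fun t => ∑ s'', P t s s'' * pk t k s'' s' :=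
          funext fun t => hpkS' t k s s'
        rw [this]
        exact HasDerivAt.fun_sum fun s'' _ => (hP_deriv s s'' θ).mul (hD s'' s' θ)
      · exact continuous_finset_sum _ fun s'' _ =>
          ((hdP_cont s s'').mul (hDc s'' s')).add ((hP_cont s s'').mul (hDcont s'' s'))
      · calc |∑ s'', (dP s s'' θ * pk θ k s'' s' + P θ s s'' * D s'' s' θ)|
            ≤ ∑ s'', |dP s s'' θ * pk θ k s'' s' + P θ s s'' * D s'' s' θ| :=
              Finset.abs_sum_le_sum_abs _ _
          _ ≤ ∑ s'', (|dP s s'' θ| + P θ s s'' * (k * Cd)) := by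
              refine Finset.sum_le_sum fun s'' _ => ?_
              have h1 : |dP s s'' θ * pk θ k s'' s'| ≤ |dP s s'' θ| := by
                rw [abs_mul, abs_of_nonneg (pk_nonneg θ k s'' s')]
                nlinarith [abs_nonneg (dP s s'' θ), pk_le1 θ k s'' s', pk_nonneg θ k s'' s']
              have h2 : |P θ s s'' * D s'' s' θ| ≤ P θ s s'' * (k * Cd) := by
                rw [abs_mul, abs_of_nonneg (hP_nonneg θ s s'')]
                exact mul_le_mul_of_nonneg_left (hDb θ hθ s'' s') (hP_nonneg θ s s'')
              calc |dP s s'' θ * pk θ k s'' s' + P θ s s'' * D s'' s' θ|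
                  ≤ |dP s s'' θ * pk θ k s'' s'| + |P θ s s'' * D s'' s' θ| := abs_add_le _ _
                _ ≤ |dP s s'' θ| + P θ s s'' * (k * Cd) := add_le_add h1 h2
          _ = (∑ s'', |dP s s'' θ|) + (∑ s'', P θ s s'') * (k * Cd) := by
              rw [Finset.sum_add_distrib, Finset.sum_mul]
          _ ≤ Cd + 1 * (k * Cd) := by
              rw [hP_row θ s]
              exact add_le_add (hCd' θ hθ s) le_rfl
          _ ≤ (k + 1 : ℕ) * Cd := by push_cast; nlinarith [hCd0]
  choose Dk hpk_cont hpkD hpkDcont hpkDb using pkD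
  -- the value function as a geometric-type series
  obtain ⟨W, hWdef⟩ : ∃ W : ℝ → S → ℝ,
      W = fun θ s => ∑' k : ℕ, γ ^ k * ∑ s', pk θ k s s' * ρ θ s' := ⟨_, rfl⟩
  have hgeom : Summable (fun k : ℕ => γ ^ k) := summable_geometric_of_lt_one hγ0 hγ1
  have habs_inner : ∀ θ (s : S) (k : ℕ),
      |γ ^ k * ∑ s', pk θ k s s' * ρ θ s'| ≤ γ ^ k * ∑ s', |ρ θ s'| := by
    intro θ s k
    rw [abs_mul, abs_pow, abs_of_nonneg hγ0]
    refine mul_le_mul_of_nonneg_left ?_ (pow_nonneg hγ0 k)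
    calc |∑ s', pk θ k s s' * ρ θ s'| ≤ ∑ s', |pk θ k s s' * ρ θ s'| :=
          Finset.abs_sum_le_sum_abs _ _
      _ ≤ ∑ s', |ρ θ s'| := by
          refine Finset.sum_le_sum fun s' _ => ?_
          rw [abs_mul, abs_of_nonneg (pk_nonneg θ k s s')]
          nlinarith [abs_nonneg (ρ θ s'), pk_le1 θ k s s', pk_nonneg θ k s s']
  have hWsummable : ∀ θ (s : S), Summable (fun k : ℕ => γ ^ k * ∑ s', pk θ k s s' * ρ θ s') := by
    intro θ s
    exact Summable.of_norm_bounded (hgeom.mul_right (∑ s', |ρ θ s'|)) fun k =>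
      habs_inner θ s k
  -- Q in terms of W
  have hQ' : ∀ θ s a, Q θ s a = r s a + γ * ∑ s₁, p s a s₁ * W θ s₁ := by
    intro θ s a
    rw [hQ θ s a]
    congr 1
    have hterm : ∀ k : ℕ,
        γ ^ (k + 1) * ∑ s', (∑ s₁, p s a s₁ * pk θ k s₁ s') *
          ((∑ a', π θ s' a' * r s' a') + H θ s')
        = ∑ s₁, p s a s₁ * (γ * (γ ^ k * ∑ s', pk θ k s₁ s' * ρ θ s')) := by
      intro k
      rw [hρdef]
      simp only [Finset.sum_mul, Finset.mul_sum]
      rw [Finset.sum_comm]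
      refine Finset.sum_congr rfl fun s₁ _ => Finset.sum_congr rfl fun s' _ => by ring
    rw [tsum_congr hterm, Summable.tsum_finsetSum (fun s₁ _ =>
      (((hWsummable θ s₁).mul_left γ).mul_left (p s a s₁)))]
    rw [hWdef]
    refine Eq.trans (Finset.sum_congr rfl fun s₁ _ => ?_) (Finset.mul_sum _ _ _).symm
    rw [tsum_mul_left, tsum_mul_left]
    ring
  -- Bellman equation for W
  have hWBell : ∀ θ s, W θ s = ρ θ s + γ * ∑ s₁, P θ s s₁ * W θ s₁ := by
    intro θ s
    have h0 : W θ s = ρ θ s + ∑' k : ℕ, γ ^ (k + 1) * ∑ s', pk θ (k + 1) s s' * ρ θ s' := by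
      simp only [hWdef]
      rw [Summable.tsum_eq_zero_add (hWsummable θ s)]
      congr 1
      simp only [pow_zero, one_mul, hpk0]
      simp
    rw [h0]
    congr 1
    have hterm : ∀ k : ℕ,
        γ ^ (k + 1) * ∑ s', pk θ (k + 1) s s' * ρ θ s'
        = ∑ s₁, P θ s s₁ * (γ * (γ ^ k * ∑ s', pk θ k s₁ s' * ρ θ s')) := by
      intro k
      simp only [hpkS' θ k s, Finset.sum_mul, Finset.mul_sum]
      rw [Finset.sum_comm]
      refine Finset.sum_congr rfl fun s₁ _ => Finset.sum_congr rfl fun s' _ => by ring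
    rw [tsum_congr hterm, Summable.tsum_finsetSum (fun s₁ _ =>
      (((hWsummable θ s₁).mul_left γ).mul_left (P θ s s₁)))]
    simp only [hWdef]
    rw [Finset.mul_sum]
    refine Finset.sum_congr rfl fun s₁ _ => ?_
    rw [tsum_mul_left, tsum_mul_left]
    ring
  -- V equals W
  have hVW : ∀ θ s, V θ s = W θ s := by
    intro θ s
    have h1 : V θ s = ρ θ s + γ * ∑ s₁, P θ s s₁ * W θ s₁ := by
      rw [hVdef, hρdef, hPdef]
      simp only [hQ']
      simp only [mul_add]
      rw [Finset.sum_add_distrib]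
      have h2 : ∑ a, π θ s a * (γ * ∑ s₁, p s a s₁ * W θ s₁)
          = γ * ∑ s₁, (∑ a, π θ s a * p s a s₁) * W θ s₁ := by
        simp only [Finset.mul_sum, Finset.sum_mul]
        rw [Finset.sum_comm]
        exact Finset.sum_congr rfl fun s₁ _ => Finset.sum_congr rfl fun a _ => by ring
      rw [h2]; ring
    rw [h1, ← hWBell]
  have hQBell : ∀ θ s a, Q θ s a = r s a + γ * ∑ s₁, p s a s₁ * V θ s₁ := by
    intro θ s a
    rw [hQ' θ s a]
    simp only [hVW]
  have hVBell : ∀ θ s, V θ s = ρ θ s + γ * ∑ s₁, P θ s s₁ * V θ s₁ := by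
    intro θ s
    rw [hVW θ s, hWBell θ s]
    simp only [hVW]
  -- differentiability of V at θ₀ via term-by-term differentiation
  have hVdiff : ∀ s : S, ∃ w : ℝ, HasDerivAt (fun θ => V θ s) w θ₀ := by
    intro s
    obtain ⟨g', hg'def⟩ : ∃ g' : ℕ → ℝ → ℝ,
        g' = fun k θ => γ ^ k * ∑ s', (Dk k s s' θ * ρ θ s' + pk θ k s s' * dρ s' θ) :=
      ⟨_, rfl⟩
    obtain ⟨u, hudef⟩ : ∃ u : ℕ → ℝ,
        u = fun k : ℕ => γ ^ k * ((Fintype.card S : ℝ) * ((k : ℝ) * Cd * Cρ + Cρ')) := ⟨_, rfl⟩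
    have hu : Summable u := by
      have h1 : Summable (fun k : ℕ => ((Fintype.card S : ℝ) * Cd * Cρ) * ((k : ℝ) ^ 1 * γ ^ k)) :=
        (summable_pow_mul_geometric_of_norm_lt_one (R := ℝ) (r := γ) 1
          (by rwa [Real.norm_eq_abs, abs_of_nonneg hγ0])).mul_left _
      have h2 : Summable (fun k : ℕ => ((Fintype.card S : ℝ) * Cρ') * γ ^ k) :=
        hgeom.mul_left _
      refine (h1.add h2).congr fun k => ?_
      rw [hudef]; push_cast; ring
    have hball : Metric.ball θ₀ 1 ⊆ K := by rw [hKdef]; exact Metric.ball_subset_closedBall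
    have hg : ∀ (k : ℕ) (θ : ℝ), θ ∈ Metric.ball θ₀ 1 →
        HasDerivAt (fun t => γ ^ k * ∑ s', pk t k s s' * ρ t s') (g' k θ) θ := by
      intro k θ _
      rw [hg'def]
      exact (HasDerivAt.fun_sum fun s' _ => (hpkD k s s' θ).mul (hρ_deriv s' θ)).const_mul (γ ^ k)
    have hg' : ∀ (k : ℕ) (θ : ℝ), θ ∈ Metric.ball θ₀ 1 → ‖g' k θ‖ ≤ u k := by
      intro k θ hθ
      have hθK : θ ∈ K := hball hθ
      rw [hg'def, hudef, Real.norm_eq_abs, abs_mul, abs_pow, abs_of_nonneg hγ0]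
      refine mul_le_mul_of_nonneg_left ?_ (pow_nonneg hγ0 k)
      calc |∑ s', (Dk k s s' θ * ρ θ s' + pk θ k s s' * dρ s' θ)|
          ≤ ∑ s', |Dk k s s' θ * ρ θ s' + pk θ k s s' * dρ s' θ| :=
            Finset.abs_sum_le_sum_abs _ _
        _ ≤ ∑ s' : S, ((k : ℝ) * Cd * Cρ + Cρ') := by
            refine Finset.sum_le_sum fun s' _ => ?_
            have h1 : |Dk k s s' θ * ρ θ s'| ≤ (k : ℝ) * Cd * Cρ := by
              rw [abs_mul]
              exact mul_le_mul (hpkDb k θ hθK s s') (hCρ θ hθK s') (abs_nonneg _)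
                (by positivity)
            have h2 : |pk θ k s s' * dρ s' θ| ≤ Cρ' := by
              rw [abs_mul, abs_of_nonneg (pk_nonneg θ k s s')]
              nlinarith [hCρ' θ hθK s', abs_nonneg (dρ s' θ), pk_le1 θ k s s',
                pk_nonneg θ k s s']
            calc |Dk k s s' θ * ρ θ s' + pk θ k s s' * dρ s' θ|
                ≤ |Dk k s s' θ * ρ θ s'| + |pk θ k s s' * dρ s' θ| := abs_add_le _ _
              _ ≤ (k : ℝ) * Cd * Cρ + Cρ' := add_le_add h1 h2
        _ = (Fintype.card S : ℝ) * ((k : ℝ) * Cd * Cρ + Cρ') := by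
            rw [Finset.sum_const, Finset.card_univ, nsmul_eq_mul]
    have hmem : θ₀ ∈ Metric.ball θ₀ 1 := Metric.mem_ball_self one_pos
    have hder := hasDerivAt_tsum_of_isPreconnected hu Metric.isOpen_ball
      (convex_ball θ₀ 1).isPreconnected hg hg' hmem (hWsummable θ₀ s) hmem
    refine ⟨∑' k : ℕ, g' k θ₀, ?_⟩
    have hfun : (fun z : ℝ => ∑' k : ℕ, γ ^ k * ∑ s', pk z k s s' * ρ z s')
        = fun z => V z s := by
      funext z
      rw [hVW z s]
      simp only [hWdef]
    rwa [hfun] at hder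
  choose Wd hWd using hVdiff
  -- the derivative satisfies a Bellman-type linear equation
  have hWd_eq : ∀ s, Wd s = dρ s θ₀ + γ * ∑ s₁, (dP s s₁ θ₀ * V θ₀ s₁ + P θ₀ s s₁ * Wd s₁) := by
    intro s
    have hR : HasDerivAt (fun θ => ρ θ s + γ * ∑ s₁, P θ s s₁ * V θ s₁)
        (dρ s θ₀ + γ * ∑ s₁, (dP s s₁ θ₀ * V θ₀ s₁ + P θ₀ s s₁ * Wd s₁)) θ₀ :=
      (hρ_deriv s θ₀).add
        ((HasDerivAt.fun_sum fun s₁ _ => (hP_deriv s s₁ θ₀).mul (hWd s₁)).const_mul γ)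
    have hfun : (fun θ => ρ θ s + γ * ∑ s₁, P θ s s₁ * V θ s₁) = fun θ => V θ s :=
      funext fun θ => (hVBell θ s).symm
    rw [hfun] at hR
    exact (hWd s).unique hR
  -- identify G
  have hG' : ∀ s, G θ₀ s = dρ s θ₀ + γ * ∑ s₁, dP s s₁ θ₀ * V θ₀ s₁ := by
    intro s
    rw [hG θ₀ s]
    have hd1 : deriv (fun θ => H θ s) θ₀ = dH s θ₀ := (hH_deriv s θ₀).deriv
    have hd2 : ∀ a, deriv (fun θ => π θ s a) θ₀ = dπ s a θ₀ := fun a => (hπ_deriv s a θ₀).deriv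
    simp only [hd1, hd2]
    simp only [hQBell θ₀ s]
    rw [hdρdef, hdP]
    simp only [mul_add]
    rw [Finset.sum_add_distrib]
    have h2 : ∑ a, dπ s a θ₀ * (γ * ∑ s₁, p s a s₁ * V θ₀ s₁)
        = γ * ∑ s₁, (∑ a, dπ s a θ₀ * p s a s₁) * V θ₀ s₁ := by
      simp only [Finset.mul_sum, Finset.sum_mul]
      rw [Finset.sum_comm]
      exact Finset.sum_congr rfl fun s₁ _ => Finset.sum_congr rfl fun a _ => by ring
    rw [h2]; ring
  have hWdG : ∀ s, Wd s = G θ₀ s + γ * ∑ s₁, P θ₀ s s₁ * Wd s₁ := by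
    intro s
    rw [hWd_eq s, hG' s, Finset.sum_add_distrib]
    ring
  -- unfolding the linear equation
  have hiter : ∀ (n : ℕ) (s : S), Wd s =
      (∑ k ∈ Finset.range n, γ ^ k * ∑ s', pk θ₀ k s s' * G θ₀ s')
      + γ ^ n * ∑ s', pk θ₀ n s s' * Wd s' := by
    intro n
    induction n with
    | zero =>
      intro s
      simp [hpk0]
    | succ n ih =>
      intro s
      rw [Finset.sum_range_succ]
      have h1 : ∑ s', pk θ₀ n s s' * Wd s'
          = (∑ s', pk θ₀ n s s' * G θ₀ s') + γ * ∑ s'', pk θ₀ (n+1) s s'' * Wd s'' := by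
        calc ∑ s', pk θ₀ n s s' * Wd s'
            = ∑ s', pk θ₀ n s s' * (G θ₀ s' + γ * ∑ s'', P θ₀ s' s'' * Wd s'') :=
              Finset.sum_congr rfl fun s' _ => by rw [← hWdG s']
          _ = (∑ s', pk θ₀ n s s' * G θ₀ s')
              + γ * ∑ s'', (∑ s', pk θ₀ n s s' * P θ₀ s' s'') * Wd s'' := by
              simp only [mul_add, Finset.sum_add_distrib]
              congr 1
              simp only [Finset.mul_sum, Finset.sum_mul]
              rw [Finset.sum_comm]
              exact Finset.sum_congr rfl fun s'' _ => Finset.sum_congr rfl fun s' _ => by ring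
          _ = (∑ s', pk θ₀ n s s' * G θ₀ s') + γ * ∑ s'', pk θ₀ (n+1) s s'' * Wd s'' := by
              congr 1
              rw [Finset.mul_sum, Finset.mul_sum]
              exact Finset.sum_congr rfl fun s'' _ => by rw [← hpkR]
      rw [ih s, h1]
      ring
  -- summability of the series of interest
  have hA_bound : ∀ k : ℕ, |γ ^ k * ∑ s', pk θ₀ k s₀ s' * G θ₀ s'| ≤ γ ^ k * ∑ s, |G θ₀ s| := by
    intro k
    rw [abs_mul, abs_pow, abs_of_nonneg hγ0]
    refine mul_le_mul_of_nonneg_left ?_ (pow_nonneg hγ0 k)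
    calc |∑ s', pk θ₀ k s₀ s' * G θ₀ s'| ≤ ∑ s', |pk θ₀ k s₀ s' * G θ₀ s'| :=
          Finset.abs_sum_le_sum_abs _ _
      _ ≤ ∑ s', |G θ₀ s'| := by
          refine Finset.sum_le_sum fun s' _ => ?_
          rw [abs_mul, abs_of_nonneg (pk_nonneg θ₀ k s₀ s')]
          nlinarith [abs_nonneg (G θ₀ s'), pk_le1 θ₀ k s₀ s', pk_nonneg θ₀ k s₀ s']
  have hAsum : Summable (fun k : ℕ => γ ^ k * ∑ s', pk θ₀ k s₀ s' * G θ₀ s') :=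
    Summable.of_norm_bounded (hgeom.mul_right (∑ s, |G θ₀ s|)) hA_bound
  -- the tail tends to zero
  have htail : Filter.Tendsto (fun n : ℕ => γ ^ n * ∑ s', pk θ₀ n s₀ s' * Wd s')
      Filter.atTop (nhds 0) := by
    apply squeeze_zero_norm (a := fun n : ℕ => γ ^ n * ∑ s, |Wd s|)
    · intro n
      rw [Real.norm_eq_abs, abs_mul, abs_pow, abs_of_nonneg hγ0]
      refine mul_le_mul_of_nonneg_left ?_ (pow_nonneg hγ0 n)
      calc |∑ s', pk θ₀ n s₀ s' * Wd s'| ≤ ∑ s', |pk θ₀ n s₀ s' * Wd s'| :=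
            Finset.abs_sum_le_sum_abs _ _
        _ ≤ ∑ s', |Wd s'| := by
            refine Finset.sum_le_sum fun s' _ => ?_
            rw [abs_mul, abs_of_nonneg (pk_nonneg θ₀ n s₀ s')]
            nlinarith [abs_nonneg (Wd s'), pk_le1 θ₀ n s₀ s', pk_nonneg θ₀ n s₀ s']
    · simpa using (tendsto_pow_atTop_nhds_zero_of_lt_one hγ0 hγ1).mul_const (∑ s, |Wd s|)
  -- partial sums converge to Wd s₀
  have hpartial : Filter.Tendsto
      (fun n : ℕ => ∑ k ∈ Finset.range n, γ ^ k * ∑ s', pk θ₀ k s₀ s' * G θ₀ s')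
      Filter.atTop (nhds (Wd s₀)) := by
    have hfn : (fun n : ℕ => ∑ k ∈ Finset.range n, γ ^ k * ∑ s', pk θ₀ k s₀ s' * G θ₀ s')
        = fun n : ℕ => Wd s₀ - γ ^ n * ∑ s', pk θ₀ n s₀ s' * Wd s' := by
      funext n
      have := hiter n s₀
      linarith
    rw [hfn]
    simpa using Filter.Tendsto.sub
      (tendsto_const_nhds : Filter.Tendsto (fun _ : ℕ => Wd s₀) Filter.atTop (nhds (Wd s₀)))
      htail
  have hWs₀ : (∑' k : ℕ, γ ^ k * ∑ s', pk θ₀ k s₀ s' * G θ₀ s') = Wd s₀ :=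
    tendsto_nhds_unique hAsum.hasSum.tendsto_sum_nat hpartial
  constructor
  · refine Summable.of_nonneg_of_le (fun ks => abs_nonneg _) (fun ks => ?_)
      ((hgeom.mul_of_nonneg (Summable.of_finite (f := fun s : S => |G θ₀ s|))
        (fun k => pow_nonneg hγ0 k) (fun s => abs_nonneg _)) :
        Summable fun ks : ℕ × S => γ ^ ks.1 * |G θ₀ ks.2|)
    rw [abs_mul, abs_mul, abs_pow, abs_of_nonneg hγ0,
      abs_of_nonneg (pk_nonneg θ₀ ks.1 s₀ ks.2)]
    have hb := mul_le_mul_of_nonneg_right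
      (mul_le_mul_of_nonneg_left (pk_le1 θ₀ ks.1 s₀ ks.2) (pow_nonneg hγ0 ks.1))
      (abs_nonneg (G θ₀ ks.2))
    simpa using hb
  · have hgoal_fun : (fun θ => (∑ a, π θ s₀ a * Q θ s₀ a) + H θ s₀) = fun θ => V θ s₀ := by
      funext θ
      rw [hVdef]
    have htsum_eq : (∑' k : ℕ, ∑ s, γ ^ k * pk θ₀ k s₀ s * G θ₀ s) = Wd s₀ := by
      rw [← hWs₀]
      exact tsum_congr fun k => by
        rw [Finset.mul_sum]
        exact Finset.sum_congr rfl fun s _ => by ring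
    rw [hgoal_fun, htsum_eq]
    exact hWd s₀
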